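/- Let κ = tan(β/2) with 0 < β ≤ 2π/3 (so 0 < κ ≤ √3), let ε ≥ 0, and define for t > 0: f(t,κ) = 2·arctan( ((κ + εκ + 2t + εt)·κ) / (κ + εκ + εt) ) − arctan t + arctan κ − π. Then f(t, √3) is strictly decreasing in t on [0, ∞), f(0, √3) = 0, and consequently f(t, κ) < 0 for all t > 0 and 0 < κ ≤ √3. -/

import Mathlib

open Real

private lemma arctan_sqrt_three : arctan (Real.sqrt 3) = π / 3 := by
  have h1 : Real.tan (π/3) = Real.sqrt 3 := by
    rw [Real.tan_eq_sin_div_cos, Real.sin_pi_div_three, Real.cos_pi_div_three]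
    field_simp
  rw [← h1, Real.arctan_tan (by linarith [Real.pi_pos]) (by linarith [Real.pi_pos])]

private lemma quot_two (n d : ℝ) (hd : d ≠ 0) (hp : n^2 - d^2 ≠ 0) :
    2*(n/d)/(1-(n/d)^2) = -(2*n*d)/(n^2-d^2) := by
  have h3 : d^2 - n^2 ≠ 0 := fun h => hp (by linarith)
  have h1 : (1-(n/d)^2) = (d^2-n^2)/d^2 := by field_simp
  have h4 : 1 - (n/d)^2 ≠ 0 := by rw [h1]; exact div_ne_zero h3 (pow_ne_zero 2 hd)
  field_simp
  ring

private lemma quot_three (n d t k : ℝ) (hp : n^2 - d^2 ≠ 0) :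
    t*(1 - (-(2*n*d)/(n^2-d^2))*k) - (-(2*n*d)/(n^2-d^2) + k)
      = (2*n*d*(1+t*k) + (t-k)*(n^2-d^2))/(n^2-d^2) := by
  field_simp
  ring

private lemma quot_one (a b c d s t : ℝ) (hab : a^2-b^2 ≠ 0) (hcd : c^2-d^2 ≠ 0) :
    (-(2*c*d)/(c^2-d^2) + t)*(1 - (-(2*a*b)/(a^2-b^2))*s)
      - (-(2*a*b)/(a^2-b^2) + s)*(1 - (-(2*c*d)/(c^2-d^2))*t)
    = ((t*(c^2-d^2) - 2*c*d)*((a^2-b^2) + 2*a*b*s)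
        - (s*(a^2-b^2) - 2*a*b)*((c^2-d^2) + 2*c*d*t))/((a^2-b^2)*(c^2-d^2)) := by
  field_simp
  ring

private lemma key_poly (K e s t : ℝ) (hK2 : K^2 = 3) (hK0 : 0 < K) (he : 0 ≤ e)
    (hs : 0 ≤ s) (hst : s < t) :
    0 < (t*((((K+e*K+2*s+e*s)*K))^2-((K+e*K+e*s))^2) - 2*((K+e*K+2*s+e*s)*K)*((K+e*K+e*s)))
          *(((((K+e*K+2*t+e*t)*K))^2-((K+e*K+e*t))^2) + 2*((K+e*K+2*t+e*t)*K)*((K+e*K+e*t))*s)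
        - (s*((((K+e*K+2*t+e*t)*K))^2-((K+e*K+e*t))^2) - 2*((K+e*K+2*t+e*t)*K)*((K+e*K+e*t)))
          *(((((K+e*K+2*s+e*s)*K))^2-((K+e*K+e*s))^2) + 2*((K+e*K+2*s+e*s)*K)*((K+e*K+e*s))*t) := by
  have ht : 0 < t := lt_of_le_of_lt hs hst
  have g1 : (0:ℝ) ≤ 144*e*(1+e)^3 := by
    apply mul_nonneg (by linarith)
    have : (0:ℝ) ≤ (1+e) := by linarith
    positivity
  have g2 : (0:ℝ) ≤ 24*K*(s+t)*(1+e)^2*(1+2*e)*(3+2*e) := by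
    apply mul_nonneg (mul_nonneg (mul_nonneg (mul_nonneg (by positivity) (by linarith)) (sq_nonneg _)) (by linarith)) (by linarith)
  have g3 : (0:ℝ) < 24*(1+e)^2*(3+6*e+2*e^2)*(s^2+t^2) := by
    apply mul_pos (mul_pos (mul_pos (by norm_num) (by positivity)) (by positivity)) (by positivity)
  have g4 : (0:ℝ) ≤ 48*s*t*(1+e)*(6+15*e+12*e^2+4*e^3) := by
    apply mul_nonneg (mul_nonneg (mul_nonneg (by linarith) ht.le) (by linarith)) (by positivity)
  have g5 : (0:ℝ) ≤ 8*K*s*t*(s+t)*(9+24*e+27*e^2+16*e^3+4*e^4) := by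
    apply mul_nonneg (mul_nonneg (mul_nonneg (mul_nonneg (by positivity) hs) ht.le) (by linarith)) (by positivity)
  have g6 : (0:ℝ) ≤ 16*s^2*t^2*e^2*(3+3*e+e^2) := by positivity
  have hQ2 : (0:ℝ) < 144*e*(1+e)^3 + 24*K*(s+t)*(1+e)^2*(1+2*e)*(3+2*e)
      + 24*(1+e)^2*(3+6*e+2*e^2)*(s^2+t^2) + 48*s*t*(1+e)*(6+15*e+12*e^2+4*e^3)
      + 8*K*s*t*(s+t)*(9+24*e+27*e^2+16*e^3+4*e^4) + 16*s^2*t^2*e^2*(3+3*e+e^2) := by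
    linarith
  have hid : (t*((((K+e*K+2*s+e*s)*K))^2-((K+e*K+e*s))^2) - 2*((K+e*K+2*s+e*s)*K)*((K+e*K+e*s)))
          *(((((K+e*K+2*t+e*t)*K))^2-((K+e*K+e*t))^2) + 2*((K+e*K+2*t+e*t)*K)*((K+e*K+e*t))*s)
        - (s*((((K+e*K+2*t+e*t)*K))^2-((K+e*K+e*t))^2) - 2*((K+e*K+2*t+e*t)*K)*((K+e*K+e*t)))
          *(((((K+e*K+2*s+e*s)*K))^2-((K+e*K+e*s))^2) + 2*((K+e*K+2*s+e*s)*K)*((K+e*K+e*s))*t)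
      = (t-s)*(144*e*(1+e)^3 + 24*K*(s+t)*(1+e)^2*(1+2*e)*(3+2*e)
      + 24*(1+e)^2*(3+6*e+2*e^2)*(s^2+t^2) + 48*s*t*(1+e)*(6+15*e+12*e^2+4*e^3)
      + 8*K*s*t*(s+t)*(9+24*e+27*e^2+16*e^3+4*e^4) + 16*s^2*t^2*e^2*(3+3*e+e^2)) := by
    linear_combination ((-1)*s*K^4 + (-1)*s*K^6 + (-48)*s*e + (-16)*s*e*K^2 + (-8)*s*e*K^4 + (-4)*s*e*K^6 + (-144)*s*e^2 + (-48)*s*e^2*K^2 + (-18)*s*e^2*K^4 + (-6)*s*e^2*K^6 + (-144)*s*e^3 + (-48)*s*e^3*K^2 + (-16)*s*e^3*K^4 + (-4)*s*e^3*K^6 + (-48)*s*e^4 + (-16)*s*e^4*K^2 + (-5)*s*e^4*K^4 + (-1)*s*e^4*K^6 + (-24)*s^2*K + (-8)*s^2*K^3 + (-4)*s^2*K^5 + (-112)*s^2*e*K + (-38)*s^2*e*K^3 + (-14)*s^2*e*K^5 + (-184)*s^2*e^2*K + (-62)*s^2*e^2*K^3 + (-18)*s^2*e^2*K^5 + (-128)*s^2*e^3*K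 + (-42)*s^2*e^3*K^3 + (-10)*s^2*e^3*K^5 + (-32)*s^2*e^4*K + (-10)*s^2*e^4*K^3 + (-2)*s^2*e^4*K^5 + (-24)*s^3 + (-8)*s^3*K^2 + (-4)*s^3*K^4 + (-96)*s^3*e + (-32)*s^3*e*K^2 + (-12)*s^3*e*K^4 + (-136)*s^3*e^2 + (-45)*s^3*e^2*K^2 + (-13)*s^3*e^2*K^4 + (-80)*s^3*e^3 + (-26)*s^3*e^3*K^2 + (-6)*s^3*e^3*K^4 + (-16)*s^3*e^4 + (-5)*s^3*e^4*K^2 + (-1)*s^3*e^4*K^4 + t*K^4 + t*K^6 + 48*t*e + 16*t*e*K^2 + 8*t*e*K^4 + 4*t*e*K^6 + 144*t*e^2 + 48*t*e^2*K^2 + 18*t*e^2*K^4 + 6*t*e^2*K^6 + 144*t*e^3 + 48*t*e^3*K^2 + 16*t*e^3*K^4 + 4*t*e^3*K^6 + 48*t*e^4 + 16*t*e^4*K^2 + 5*t*e^4*K^4 + t*e^4*K^6 + (-72)*t*s^2 + (-24)*t*s^2*K^2 + (-8)*t*s^2*K^4 + (-240)*t*s^2*e + (-80)*t*s^2*e*K^2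 + (-24)*t*s^2*e*K^4 + (-296)*t*s^2*e^2 + (-99)*t*s^2*e^2*K^2 + (-27)*t*s^2*e^2*K^4 + (-176)*t*s^2*e^3 + (-58)*t*s^2*e^3*K^2 + (-14)*t*s^2*e^3*K^4 + (-48)*t*s^2*e^4 + (-15)*t*s^2*e^4*K^2 + (-3)*t*s^2*e^4*K^4 + (-24)*t*s^3*K + (-8)*t*s^3*K^3 + (-64)*t*s^3*e*K + (-20)*t*s^3*e*K^3 + (-72)*t*s^3*e^2*K + (-20)*t*s^3*e^2*K^3 + (-42)*t*s^3*e^3*K + (-10)*t*s^3*e^3*K^3 + (-10)*t*s^3*e^4*K + (-2)*t*s^3*e^4*K^3 + 24*t^2*K + 8*t^2*K^3 + 4*t^2*K^5 + 112*t^2*e*K + 38*t^2*e*K^3 + 14*t^2*e*K^5 + 184*t^2*e^2*K + 62*t^2*e^2*K^3 + 18*t^2*e^2*K^5 + 128*t^2*e^3*K + 42*t^2*e^3*K^3 + 10*t^2*e^3*K^5 + 32*t^2*e^4*K + 10*t^2*e^4*K^3 + 2*t^2*e^4*K^5 + 72*t^2*s + 24*t^2*s*K^2 + 8*t^2*s*K^4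 + 240*t^2*s*e + 80*t^2*s*e*K^2 + 24*t^2*s*e*K^4 + 296*t^2*s*e^2 + 99*t^2*s*e^2*K^2 + 27*t^2*s*e^2*K^4 + 176*t^2*s*e^3 + 58*t^2*s*e^3*K^2 + 14*t^2*s*e^3*K^4 + 48*t^2*s*e^4 + 15*t^2*s*e^4*K^2 + 3*t^2*s*e^4*K^4 + (-16)*t^2*s^3*e^2 + (-4)*t^2*s^3*e^2*K^2 + (-16)*t^2*s^3*e^3 + (-4)*t^2*s^3*e^3*K^2 + (-5)*t^2*s^3*e^4 + (-1)*t^2*s^3*e^4*K^2 + 24*t^3 + 8*t^3*K^2 + 4*t^3*K^4 + 96*t^3*e + 32*t^3*e*K^2 + 12*t^3*e*K^4 + 136*t^3*e^2 + 45*t^3*e^2*K^2 + 13*t^3*e^2*K^4 + 80*t^3*e^3 + 26*t^3*e^3*K^2 + 6*t^3*e^3*K^4 + 16*t^3*e^4 + 5*t^3*e^4*K^2 + t^3*e^4*K^4 + 24*t^3*s*K + 8*t^3*s*K^3 + 64*t^3*s*e*K + 20*t^3*s*e*K^3 + 72*t^3*s*e^2*K + 20*t^3*s*e^2*K^3 +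 42*t^3*s*e^3*K + 10*t^3*s*e^3*K^3 + 10*t^3*s*e^4*K + 2*t^3*s*e^4*K^3 + 16*t^3*s^2*e^2 + 4*t^3*s^2*e^2*K^2 + 16*t^3*s^2*e^3 + 4*t^3*s^2*e^3*K^2 + 5*t^3*s^2*e^4 + t^3*s^2*e^4*K^2) * hK2
  rw [hid]
  exact mul_pos (by linarith) hQ2

private lemma aux_anti (e : ℝ) (he : 0 ≤ e) {K s t : ℝ} (hK2 : K^2 = 3) (hK1 : 1 < K)
    (hs : 0 ≤ s) (hst : s < t) :
    2 * arctan (((K + e * K + 2 * t + e * t) * K) / (K + e * K + e * t)) - arctan t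
      < 2 * arctan (((K + e * K + 2 * s + e * s) * K) / (K + e * K + e * s)) - arctan s := by
  have hK0 : (0:ℝ) < K := by linarith
  have ht : 0 < t := lt_of_le_of_lt hs hst
  have key : ∀ x : ℝ, 0 ≤ x →
      2 * arctan (((K + e * K + 2 * x + e * x) * K) / (K + e * K + e * x))
        = arctan (-(2*((K+e*K+2*x+e*x)*K)*(K+e*K+e*x))
            / (((K+e*K+2*x+e*x)*K)^2 - (K+e*K+e*x)^2)) + π := by
    intro x hx
    have hd : 0 < K + e*K + e*x := by
      have := mul_nonneg he hK0.le
      have := mul_nonneg he hx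
      linarith
    have hn : K + e*K + e*x < (K+e*K+2*x+e*x)*K := by
      nlinarith [mul_pos hK0 (show (0:ℝ) < K - 1 by linarith),
        mul_nonneg (mul_nonneg he hK0.le) (show (0:ℝ) ≤ K - 1 by linarith),
        mul_nonneg (mul_nonneg hx he) (show (0:ℝ) ≤ K - 1 by linarith),
        mul_nonneg hx hK0.le]
    have hg : 1 < ((K + e * K + 2 * x + e * x) * K) / (K + e * K + e * x) :=
      (one_lt_div hd).2 hn
    have hp : 0 < ((K+e*K+2*x+e*x)*K)^2 - (K+e*K+e*x)^2 := by
      nlinarith [mul_pos (show (0:ℝ) < (K+e*K+2*x+e*x)*K - (K+e*K+e*x) by linarith)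
        (show (0:ℝ) < (K+e*K+2*x+e*x)*K + (K+e*K+e*x) by linarith)]
    rw [two_mul_arctan_add_pi hg]
    congr 2
    exact quot_two _ _ hd.ne' hp.ne'
  have hdT : 0 < K + e*K + e*t := by
    have := mul_nonneg he hK0.le; have := mul_nonneg he ht.le; linarith
  have hdS : 0 < K + e*K + e*s := by
    have := mul_nonneg he hK0.le; have := mul_nonneg he hs; linarith
  have hnT : K + e*K + e*t < (K+e*K+2*t+e*t)*K := by
    nlinarith [mul_pos hK0 (show (0:ℝ) < K - 1 by linarith),
      mul_nonneg (mul_nonneg he hK0.le) (show (0:ℝ) ≤ K - 1 by linarith),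
      mul_nonneg (mul_nonneg ht.le he) (show (0:ℝ) ≤ K - 1 by linarith),
      mul_nonneg ht.le hK0.le]
  have hnS : K + e*K + e*s < (K+e*K+2*s+e*s)*K := by
    nlinarith [mul_pos hK0 (show (0:ℝ) < K - 1 by linarith),
      mul_nonneg (mul_nonneg he hK0.le) (show (0:ℝ) ≤ K - 1 by linarith),
      mul_nonneg (mul_nonneg hs he) (show (0:ℝ) ≤ K - 1 by linarith),
      mul_nonneg hs hK0.le]
  have hpT : 0 < ((K+e*K+2*t+e*t)*K)^2 - (K+e*K+e*t)^2 := by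
    nlinarith [mul_pos (show (0:ℝ) < (K+e*K+2*t+e*t)*K - (K+e*K+e*t) by linarith)
      (show (0:ℝ) < (K+e*K+2*t+e*t)*K + (K+e*K+e*t) by linarith)]
  have hpS : 0 < ((K+e*K+2*s+e*s)*K)^2 - (K+e*K+e*s)^2 := by
    nlinarith [mul_pos (show (0:ℝ) < (K+e*K+2*s+e*s)*K - (K+e*K+e*s) by linarith)
      (show (0:ℝ) < (K+e*K+2*s+e*s)*K + (K+e*K+e*s) by linarith)]
  rw [key t ht.le, key s hs]
  have hGT : -(2*((K+e*K+2*t+e*t)*K)*(K+e*K+e*t))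
      / (((K+e*K+2*t+e*t)*K)^2 - (K+e*K+e*t)^2) < 0 := by
    apply div_neg_of_neg_of_pos _ hpT
    nlinarith [mul_pos (show (0:ℝ) < (K+e*K+2*t+e*t)*K by linarith) hdT]
  have hGS : -(2*((K+e*K+2*s+e*s)*K)*(K+e*K+e*s))
      / (((K+e*K+2*s+e*s)*K)^2 - (K+e*K+e*s)^2) < 0 := by
    apply div_neg_of_neg_of_pos _ hpS
    nlinarith [mul_pos (show (0:ℝ) < (K+e*K+2*s+e*s)*K by linarith) hdS]
  have hm1 : (-(2*((K+e*K+2*t+e*t)*K)*(K+e*K+e*t))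
      / (((K+e*K+2*t+e*t)*K)^2 - (K+e*K+e*t)^2)) * s ≤ 0 :=
    mul_nonpos_of_nonpos_of_nonneg hGT.le hs
  have hm2 : (-(2*((K+e*K+2*s+e*s)*K)*(K+e*K+e*s))
      / (((K+e*K+2*s+e*s)*K)^2 - (K+e*K+e*s)^2)) * t ≤ 0 :=
    mul_nonpos_of_nonpos_of_nonneg hGS.le ht.le
  suffices h : arctan (-(2*((K+e*K+2*t+e*t)*K)*(K+e*K+e*t))
      / (((K+e*K+2*t+e*t)*K)^2 - (K+e*K+e*t)^2)) + arctan s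
    < arctan (-(2*((K+e*K+2*s+e*s)*K)*(K+e*K+e*s))
      / (((K+e*K+2*s+e*s)*K)^2 - (K+e*K+e*s)^2)) + arctan t by linarith
  rw [Real.arctan_add (by linarith : (-(2*((K+e*K+2*t+e*t)*K)*(K+e*K+e*t))
      / (((K+e*K+2*t+e*t)*K)^2 - (K+e*K+e*t)^2)) * s < 1),
    Real.arctan_add (by linarith : (-(2*((K+e*K+2*s+e*s)*K)*(K+e*K+e*s))
      / (((K+e*K+2*s+e*s)*K)^2 - (K+e*K+e*s)^2)) * t < 1)]
  apply Real.arctan_strictMono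
  have hden1 : 0 < 1 - (-(2*((K+e*K+2*t+e*t)*K)*(K+e*K+e*t))
      / (((K+e*K+2*t+e*t)*K)^2 - (K+e*K+e*t)^2)) * s := by linarith
  have hden2 : 0 < 1 - (-(2*((K+e*K+2*s+e*s)*K)*(K+e*K+e*s))
      / (((K+e*K+2*s+e*s)*K)^2 - (K+e*K+e*s)^2)) * t := by linarith
  rw [div_lt_div_iff₀ hden1 hden2]
  have hrep := quot_one ((K+e*K+2*t+e*t)*K) (K+e*K+e*t) ((K+e*K+2*s+e*s)*K) (K+e*K+e*s)
      s t hpT.ne' hpS.ne'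
  have hQ1 := key_poly K e s t hK2 hK0 he hs hst
  have hpos : 0 < (-(2*((K+e*K+2*s+e*s)*K)*(K+e*K+e*s))
        / (((K+e*K+2*s+e*s)*K)^2 - (K+e*K+e*s)^2) + t)
      * (1 - (-(2*((K+e*K+2*t+e*t)*K)*(K+e*K+e*t))
        / (((K+e*K+2*t+e*t)*K)^2 - (K+e*K+e*t)^2)) * s)
      - (-(2*((K+e*K+2*t+e*t)*K)*(K+e*K+e*t))
        / (((K+e*K+2*t+e*t)*K)^2 - (K+e*K+e*t)^2) + s)
      * (1 - (-(2*((K+e*K+2*s+e*s)*K)*(K+e*K+e*s))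
        / (((K+e*K+2*s+e*s)*K)^2 - (K+e*K+e*s)^2)) * t) := by
    rw [hrep]
    exact div_pos hQ1 (mul_pos hpT hpS)
  linarith

private lemma p3_pos (e : ℝ) (he : 0 ≤ e) {t k : ℝ} (ht : 0 < t) (hk : 0 < k)
    (hk3 : k^2 ≤ 3) (hnd : k + e*k + e*t < (k+e*k+2*t+e*t)*k) :
    0 < 2*((k+e*k+2*t+e*t)*k)*(k+e*k+e*t)*(1+t*k)
        + (t-k)*(((k+e*k+2*t+e*t)*k)^2 - (k+e*k+e*t)^2) := by
  rcases le_or_gt (e*(2+e)) (k*(4+8*e+3*e^2)) with hE | hE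
  · have c1 : (0:ℝ) ≤ e*t^2*((k+e*k+2*t+e*t)*k - (k+e*k+e*t)) :=
      mul_nonneg (mul_nonneg he (sq_nonneg t)) (by linarith)
    have c2 : (0:ℝ) ≤ k^3*(1+e)^2*(3-k^2) :=
      mul_nonneg (mul_nonneg (by positivity) (sq_nonneg _)) (by linarith)
    have c3 : (0:ℝ) ≤ t*k^2*((3-k^2) + 8*e + 5*e^2 + k^2*e^2) := by
      apply mul_nonneg (mul_nonneg ht.le (sq_nonneg k))
      nlinarith [sq_nonneg e, sq_nonneg (k*e)]
    have h36 : k*(1+e) ≤ 3+2*e := by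
      nlinarith [hk3, sq_nonneg (1+e), mul_nonneg hk.le he, he]
    have c4 : (0:ℝ) < t^2*k*(e*(3+2*e) + k^2*(4+10*e+5*e^2) - k*e*(1+e)) := by
      apply mul_pos (mul_pos (by positivity) hk)
      nlinarith [mul_nonneg he (show (0:ℝ) ≤ 3+2*e - k*(1+e) by linarith),
        mul_pos hk hk, mul_nonneg (mul_nonneg hk.le hk.le)
          (mul_nonneg he (show (0:ℝ) ≤ 10+5*e by linarith))]
    have c5 : (0:ℝ) ≤ t^3*k*(k*(4+8*e+3*e^2) - e*(2+e)) :=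
      mul_nonneg (mul_nonneg (by positivity) hk.le) (by linarith)
    nlinarith [c1, c2, c3, c4, c5]
  · exfalso
    have h1 : k*(2+e) < e := by
      nlinarith [mul_nonneg (mul_nonneg hk.le he) he, mul_nonneg hk.le he,
        (show (0:ℝ) ≤ 2+e by linarith)]
    have h2 : k < 1 := by nlinarith [he]
    nlinarith [hnd, mul_nonneg (mul_nonneg (show (0:ℝ) ≤ 1+e by linarith) hk.le)
      (show (0:ℝ) ≤ 1-k by linarith), mul_pos ht (show (0:ℝ) < e - k*(2+e) by linarith)]

private lemma aux_neg (e : ℝ) (he : 0 ≤ e) {t k : ℝ} (ht : 0 < t) (hk : 0 < k)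
    (hk3 : k^2 ≤ 3) :
    2 * arctan (((k + e * k + 2 * t + e * t) * k) / (k + e * k + e * t))
      - arctan t + arctan k - π < 0 := by
  have hd : 0 < k + e*k + e*t := by
    have := mul_nonneg he hk.le; have := mul_nonneg he ht.le; linarith
  have harctant : 0 < arctan t := by
    have := Real.arctan_strictMono ht; rwa [Real.arctan_zero] at this
  have harck : arctan k < π/2 := Real.arctan_lt_pi_div_two k
  rcases le_or_gt ((k+e*k+2*t+e*t)*k) (k+e*k+e*t) with h | h
  · have hq : ((k + e * k + 2 * t + e * t) * k) / (k + e * k + e * t) ≤ 1 :=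
      (div_le_one hd).2 h
    have h1 : arctan (((k + e * k + 2 * t + e * t) * k) / (k + e * k + e * t)) ≤ arctan 1 :=
      Real.arctan_strictMono.monotone hq
    rw [Real.arctan_one] at h1
    linarith
  · have hn : 0 < (k+e*k+2*t+e*t)*k := lt_trans hd h
    have hp : 0 < ((k+e*k+2*t+e*t)*k)^2 - (k+e*k+e*t)^2 := by
      nlinarith [mul_pos (show (0:ℝ) < (k+e*k+2*t+e*t)*k - (k+e*k+e*t) by linarith)
        (show (0:ℝ) < (k+e*k+2*t+e*t)*k + (k+e*k+e*t) by linarith)]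
    have hg : 1 < ((k + e * k + 2 * t + e * t) * k) / (k + e * k + e * t) :=
      (one_lt_div hd).2 h
    rw [two_mul_arctan_add_pi hg, quot_two _ _ hd.ne' hp.ne']
    have hG : -(2*((k+e*k+2*t+e*t)*k)*(k+e*k+e*t))
        / (((k+e*k+2*t+e*t)*k)^2 - (k+e*k+e*t)^2) < 0 := by
      apply div_neg_of_neg_of_pos _ hp
      nlinarith [mul_pos hn hd]
    have hGk : (-(2*((k+e*k+2*t+e*t)*k)*(k+e*k+e*t))
        / (((k+e*k+2*t+e*t)*k)^2 - (k+e*k+e*t)^2)) * k < 1 := by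
      nlinarith [mul_neg_of_neg_of_pos hG hk]
    have hadd := Real.arctan_add hGk
    have hden : 0 < 1 - (-(2*((k+e*k+2*t+e*t)*k)*(k+e*k+e*t))
        / (((k+e*k+2*t+e*t)*k)^2 - (k+e*k+e*t)^2)) * k := by
      nlinarith [mul_neg_of_neg_of_pos hG hk]
    have hrep := quot_three ((k+e*k+2*t+e*t)*k) (k+e*k+e*t) t k hp.ne'
    have hP3 := p3_pos e he ht hk hk3 h
    have hpos : 0 < t * (1 - (-(2*((k+e*k+2*t+e*t)*k)*(k+e*k+e*t))
          / (((k+e*k+2*t+e*t)*k)^2 - (k+e*k+e*t)^2)) * k)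
        - (-(2*((k+e*k+2*t+e*t)*k)*(k+e*k+e*t))
          / (((k+e*k+2*t+e*t)*k)^2 - (k+e*k+e*t)^2) + k) := by
      rw [hrep]
      exact div_pos hP3 hp
    have hlt : (-(2*((k+e*k+2*t+e*t)*k)*(k+e*k+e*t))
          / (((k+e*k+2*t+e*t)*k)^2 - (k+e*k+e*t)^2) + k)
          / (1 - (-(2*((k+e*k+2*t+e*t)*k)*(k+e*k+e*t))
          / (((k+e*k+2*t+e*t)*k)^2 - (k+e*k+e*t)^2)) * k) < t := by
      rw [div_lt_iff₀ hden]
      nlinarith [hpos]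
    have hfin : arctan ((-(2*((k+e*k+2*t+e*t)*k)*(k+e*k+e*t))
          / (((k+e*k+2*t+e*t)*k)^2 - (k+e*k+e*t)^2) + k)
          / (1 - (-(2*((k+e*k+2*t+e*t)*k)*(k+e*k+e*t))
          / (((k+e*k+2*t+e*t)*k)^2 - (k+e*k+e*t)^2)) * k)) < arctan t :=
      Real.arctan_strictMono hlt
    linarith [hadd, hfin]

/-- With `κ = tan(β/2)`, `0 < κ ≤ √3`, `ε ≥ 0`, and
`f(t,κ) = 2·arctan(((κ+εκ+2t+εt)κ)/(κ+εκ+εt)) − arctan t + arctan κ − π`: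
`f(·,√3)` is strictly decreasing on `[0,∞)`, `f(0,√3) = 0`, and consequently
`f(t,κ) < 0` for all `t > 0` and `0 < κ ≤ √3`. -/
theorem stmt8 (ε : ℝ) (hε : 0 ≤ ε) (f : ℝ → ℝ → ℝ)
    (hf : ∀ t κ : ℝ, f t κ =
      2 * arctan (((κ + ε * κ + 2 * t + ε * t) * κ) / (κ + ε * κ + ε * t))
        - arctan t + arctan κ - π) :
    StrictAntiOn (fun t => f t (Real.sqrt 3)) (Set.Ici 0) ∧
    f 0 (Real.sqrt 3) = 0 ∧
    ∀ t κ : ℝ, 0 < t → 0 < κ → κ ≤ Real.sqrt 3 → f t κ < 0 := by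
  have hK2 : (Real.sqrt 3)^2 = 3 := Real.sq_sqrt (by norm_num)
  have hK0 : 0 < Real.sqrt 3 := Real.sqrt_pos.2 (by norm_num)
  have hK1 : 1 < Real.sqrt 3 := by nlinarith [hK2, hK0]
  refine ⟨?_, ?_, ?_⟩
  · intro a ha b hb hab
    simp only [Set.mem_Ici] at ha hb
    simp only
    rw [hf a, hf b]
    have := aux_anti ε hε hK2 hK1 ha hab
    linarith
  · rw [hf]
    have ha : 0 < Real.sqrt 3 + ε * Real.sqrt 3 := by
      have := mul_nonneg hε hK0.le; linarith
    have harg : ((Real.sqrt 3 + ε * Real.sqrt 3 + 2 * 0 + ε * 0) * Real.sqrt 3)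
        / (Real.sqrt 3 + ε * Real.sqrt 3 + ε * 0) = Real.sqrt 3 := by
      simp only [mul_zero, add_zero]
      rw [mul_comm, mul_div_assoc, div_self ha.ne', mul_one]
    rw [harg, _root_.arctan_sqrt_three, Real.arctan_zero]
    ring
  · intro t κ ht hκ hκ3
    rw [hf]
    have hκ2 : κ^2 ≤ 3 := by nlinarith [hκ3, hK2, hκ]
    exact aux_neg ε hε ht hκ hκ2
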